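/- Let A ⊆ ℝ × ℝ be a nonempty bounded open set and let λ : ℝ → ℝ × ℝ be continuous on [0,1] with λ(0) = λ(1) and with frontier A = λ '' [0,1]. Set a_left = inf of the first coordinates of points of A, a_right = sup of the first coordinates, a_bottom = inf of the second coordinates, a_top = sup of the second coordinates. Then (i) the Lebesgue (area) measure of A is at most (a_right − a_left)·(a_top − a_bottom), and (ii) the ℓ¹-length of λ over [0,1] is at least 2·((a_right − a_left) + (a_top − a_bottom)). -/

import Mathlib

open Set MeasureTheory

private lemma chain3 {E : Type*} [PseudoEMetricSpace E] (g : ℕ → E) {i j n : ℕ}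
    (hij : i ≤ j) (hjn : j ≤ n) :
    edist (g 0) (g i) + edist (g i) (g j) + edist (g j) (g n)
      ≤ ∑ k ∈ Finset.range n, edist (g (k + 1)) (g k) := by
  have hsum : ∑ k ∈ Finset.range n, edist (g (k + 1)) (g k)
      = (∑ k ∈ Finset.Ico 0 i, edist (g (k + 1)) (g k))
        + (∑ k ∈ Finset.Ico i j, edist (g (k + 1)) (g k))
        + (∑ k ∈ Finset.Ico j n, edist (g (k + 1)) (g k)) := by
    rw [Finset.sum_Ico_consecutive _ (Nat.zero_le i) hij,
      Finset.sum_Ico_consecutive _ (Nat.zero_le j) hjn, Finset.range_eq_Ico]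
  rw [hsum]
  gcongr
  · exact (edist_le_Ico_sum_edist g (Nat.zero_le i)).trans
      (le_of_eq (Finset.sum_congr rfl fun k _ => edist_comm _ _))
  · exact (edist_le_Ico_sum_edist g hij).trans
      (le_of_eq (Finset.sum_congr rfl fun k _ => edist_comm _ _))
  · exact (edist_le_Ico_sum_edist g hjn).trans
      (le_of_eq (Finset.sum_congr rfl fun k _ => edist_comm _ _))

private lemma key1 (g : ℕ → ℝ) {i j : ℕ} (hij : i ≤ j) (hj5 : j ≤ 5) (h50 : g 5 = g 0) :
    ENNReal.ofReal (2 * |g j - g i|) ≤ ∑ k ∈ Finset.range 5, edist (g (k + 1)) (g k) := by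
  refine le_trans ?_ (chain3 g hij hj5)
  have e1 : ENNReal.ofReal (2 * |g j - g i|) = edist (g i) (g j) + edist (g i) (g j) := by
    rw [edist_dist, Real.dist_eq, ← ENNReal.ofReal_add (abs_nonneg _) (abs_nonneg _),
      abs_sub_comm (g i) (g j), two_mul]
  rw [e1]
  have h05 : edist (g 0) (g i) + edist (g j) (g 5) = edist (g i) (g 0) + edist (g 0) (g j) := by
    rw [h50, edist_comm (g i) (g 0), edist_comm (g j) (g 0)]
  have htri : edist (g i) (g j) ≤ edist (g i) (g 0) + edist (g 0) (g j) := edist_triangle _ _ _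
  calc edist (g i) (g j) + edist (g i) (g j)
      ≤ (edist (g i) (g 0) + edist (g 0) (g j)) + edist (g i) (g j) := by gcongr
    _ = edist (g 0) (g i) + edist (g i) (g j) + edist (g j) (g 5) := by rw [← h05]; ring

private lemma six_chain (f : ℝ → WithLp 1 (ℝ × ℝ)) (hf : f 0 = f 1)
    (v : ℕ → ℝ) (hv : Monotone v) (hmem : ∀ i, v i ∈ Set.Icc (0:ℝ) 1)
    (hv0 : v 0 = 0) (hv5 : v 5 = 1)
    (ia ib ic id : ℕ) (h1 : ia ≤ ib) (h2 : ib ≤ 5) (h3 : ic ≤ id) (h4 : id ≤ 5) :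
    ENNReal.ofReal (2 * |(f (v ib)).fst - (f (v ia)).fst|)
      + ENNReal.ofReal (2 * |(f (v id)).snd - (f (v ic)).snd|)
      ≤ eVariationOn f (Set.Icc 0 1) := by
  refine le_trans ?_ (eVariationOn.sum_le (f := f) (n := 5) hv hmem)
  have hed : ∀ k : ℕ, edist (f (v (k + 1))) (f (v k))
      = edist ((f (v (k + 1))).fst) ((f (v k)).fst) + edist ((f (v (k + 1))).snd) ((f (v k)).snd) := by
    intro k
    rw [WithLp.prod_edist_eq_add (by norm_num)]
    norm_num
  calc ENNReal.ofReal (2 * |(f (v ib)).fst - (f (v ia)).fst|)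
        + ENNReal.ofReal (2 * |(f (v id)).snd - (f (v ic)).snd|)
      ≤ (∑ k ∈ Finset.range 5, edist ((f (v (k + 1))).fst) ((f (v k)).fst))
        + ∑ k ∈ Finset.range 5, edist ((f (v (k + 1))).snd) ((f (v k)).snd) := by
        gcongr
        · exact key1 (fun k => (f (v k)).fst) h1 h2
            (show (f (v 5)).fst = (f (v 0)).fst by rw [hv5, hv0, hf])
        · exact key1 (fun k => (f (v k)).snd) h3 h4
            (show (f (v 5)).snd = (f (v 0)).snd by rw [hv5, hv0, hf])
    _ = ∑ k ∈ Finset.range 5, edist (f (v (k + 1))) (f (v k)) := by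
        rw [← Finset.sum_add_distrib]
        exact Finset.sum_congr rfl fun k _ => (hed k).symm

private def seq6 (s1 s2 s3 s4 : ℝ) : ℕ → ℝ
  | 0 => 0
  | 1 => s1
  | 2 => s2
  | 3 => s3
  | 4 => s4
  | _ => 1

private lemma seq6_mono {s1 s2 s3 s4 : ℝ} (h0 : 0 ≤ s1) (h1 : s1 ≤ s2) (h2 : s2 ≤ s3)
    (h3 : s3 ≤ s4) (h4 : s4 ≤ 1) : Monotone (seq6 s1 s2 s3 s4) := by
  apply monotone_nat_of_le_succ
  intro n
  match n with
  | 0 => exact h0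
  | 1 => exact h1
  | 2 => exact h2
  | 3 => exact h3
  | 4 => exact h4
  | (n + 5) => exact le_refl 1

private lemma seq6_mem {s1 s2 s3 s4 : ℝ} (h0 : 0 ≤ s1) (h1 : s1 ≤ s2) (h2 : s2 ≤ s3)
    (h3 : s3 ≤ s4) (h4 : s4 ≤ 1) : ∀ i, seq6 s1 s2 s3 s4 i ∈ Set.Icc (0:ℝ) 1 := by
  intro i
  match i with
  | 0 => exact ⟨le_rfl, zero_le_one⟩
  | 1 => exact ⟨h0, h1.trans (h2.trans (h3.trans h4))⟩
  | 2 => exact ⟨h0.trans h1, h2.trans (h3.trans h4)⟩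
  | 3 => exact ⟨h0.trans (h1.trans h2), h3.trans h4⟩
  | 4 => exact ⟨h0.trans (h1.trans (h2.trans h3)), h4⟩
  | (n + 5) => exact ⟨zero_le_one, le_rfl⟩

private lemma exists_frontier_max (A : Set (ℝ × ℝ)) (hne : A.Nonempty)
    (hbdd : Bornology.IsBounded A) (hopen : IsOpen A) (g : ℝ × ℝ → ℝ) (hg : Continuous g)
    (hloc : ∀ p : ℝ × ℝ, ∀ ε : ℝ, 0 < ε → ∃ q, dist q p < ε ∧ g p < g q) :
    ∃ p ∈ frontier A, g p = sSup (g '' A) := by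
  have hK : IsCompact (closure A) := hbdd.isCompact_closure
  obtain ⟨p, hpK, hmax⟩ := hK.exists_isMaxOn hne.closure hg.continuousOn
  have hpA : p ∉ A := by
    intro hpA
    obtain ⟨ε, hε, hball⟩ := Metric.isOpen_iff.1 hopen p hpA
    obtain ⟨q, hq, hlt⟩ := hloc p ε hε
    exact absurd (hmax (subset_closure (hball (Metric.mem_ball.2 hq)))) (not_le.2 hlt)
  have hfr : p ∈ frontier A := by
    rw [hopen.frontier_eq]
    exact ⟨hpK, hpA⟩
  have hbA : BddAbove (g '' A) :=
    ((hK.image hg).bddAbove).mono (Set.image_mono subset_closure)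
  refine ⟨p, hfr, le_antisymm ?_ (csSup_le (hne.image g) ?_)⟩
  · have h1 : g p ∈ closure (g '' A) :=
      image_closure_subset_closure_image hg ⟨p, hpK, rfl⟩
    exact closure_minimal (fun x hx => le_csSup hbA hx) isClosed_Iic h1
  · rintro x ⟨q, hq, rfl⟩
    exact hmax (subset_closure hq)

/-- **Lemma 2.1 (bounding box).** For a nonempty bounded open set `A ⊆ ℝ × ℝ` whose
frontier is the image of a closed curve `lam` on `[0,1]`, the area of `A` is at most the
area of the bounding box `[a_left, a_right] × [a_bottom, a_top]`, and the ℓ¹-length of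
`lam` over `[0,1]` is at least the ℓ¹-perimeter of the bounding box. -/
theorem boundingBox_area_and_perimeter
    (A : Set (ℝ × ℝ)) (hne : A.Nonempty) (hbdd : Bornology.IsBounded A)
    (hopen : IsOpen A) (lam : ℝ → ℝ × ℝ)
    (hcont : ContinuousOn lam (Set.Icc 0 1)) (hclosed : lam 0 = lam 1)
    (hfrontier : frontier A = lam '' Set.Icc 0 1) :
    MeasureTheory.volume A ≤
      ENNReal.ofReal ((sSup (Prod.fst '' A) - sInf (Prod.fst '' A)) *
        (sSup (Prod.snd '' A) - sInf (Prod.snd '' A))) ∧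
    ENNReal.ofReal (2 * ((sSup (Prod.fst '' A) - sInf (Prod.fst '' A)) +
        (sSup (Prod.snd '' A) - sInf (Prod.snd '' A)))) ≤
      eVariationOn (fun t => (WithLp.equiv 1 (ℝ × ℝ)).symm (lam t)) (Set.Icc 0 1) := by
  have hK : IsCompact (closure A) := hbdd.isCompact_closure
  set xL := sInf (Prod.fst '' A) with hxLdef
  set xR := sSup (Prod.fst '' A) with hxRdef
  set yB := sInf (Prod.snd '' A) with hyBdef
  set yT := sSup (Prod.snd '' A) with hyTdef
  have hbax : BddAbove (Prod.fst '' A) :=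
    ((hK.image continuous_fst).bddAbove).mono (Set.image_mono subset_closure)
  have hbbx : BddBelow (Prod.fst '' A) :=
    ((hK.image continuous_fst).bddBelow).mono (Set.image_mono subset_closure)
  have hbay : BddAbove (Prod.snd '' A) :=
    ((hK.image continuous_snd).bddAbove).mono (Set.image_mono subset_closure)
  have hbby : BddBelow (Prod.snd '' A) :=
    ((hK.image continuous_snd).bddBelow).mono (Set.image_mono subset_closure)
  have hxLR : xL ≤ xR := csInf_le_csSup (hne.image _) hbbx hbax
  have hyBT : yB ≤ yT := csInf_le_csSup (hne.image _) hbby hbay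
  constructor
  · -- area bound
    have hsub : A ⊆ Set.Icc ((xL, yB) : ℝ × ℝ) (xR, yT) := by
      intro p hp
      rw [Set.mem_Icc]
      exact ⟨Prod.le_def.2 ⟨csInf_le hbbx ⟨p, hp, rfl⟩, csInf_le hbby ⟨p, hp, rfl⟩⟩,
        Prod.le_def.2 ⟨le_csSup hbax ⟨p, hp, rfl⟩, le_csSup hbay ⟨p, hp, rfl⟩⟩⟩
    calc MeasureTheory.volume A ≤ MeasureTheory.volume (Set.Icc ((xL, yB) : ℝ × ℝ) (xR, yT)) :=
          measure_mono hsub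
      _ = ENNReal.ofReal (xR - xL) * ENNReal.ofReal (yT - yB) := by
          rw [Set.Icc_prod_eq, MeasureTheory.Measure.volume_eq_prod,
            MeasureTheory.Measure.prod_prod, Real.volume_Icc, Real.volume_Icc]
      _ = ENNReal.ofReal ((xR - xL) * (yT - yB)) :=
          (ENNReal.ofReal_mul (sub_nonneg.2 hxLR)).symm
  · -- perimeter bound
    have hR : ∃ p ∈ frontier A, p.1 = xR := by
      refine exists_frontier_max A hne hbdd hopen Prod.fst continuous_fst ?_
      intro p ε hε
      refine ⟨(p.1 + ε / 2, p.2), ?_, by simp; linarith⟩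
      have h2 : dist ((p.1 + ε / 2, p.2) : ℝ × ℝ) p = ε / 2 := by
        rw [Prod.dist_eq]
        simp only [Real.dist_eq, dist_self, add_sub_cancel_left]
        rw [abs_of_nonneg (half_pos hε).le, max_eq_left (half_pos hε).le]
      rw [h2]; linarith
    have hT : ∃ p ∈ frontier A, p.2 = yT := by
      refine exists_frontier_max A hne hbdd hopen Prod.snd continuous_snd ?_
      intro p ε hε
      refine ⟨(p.1, p.2 + ε / 2), ?_, by simp; linarith⟩
      have h2 : dist ((p.1, p.2 + ε / 2) : ℝ × ℝ) p = ε / 2 := by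
        rw [Prod.dist_eq]
        simp only [Real.dist_eq, dist_self, add_sub_cancel_left]
        rw [abs_of_nonneg (half_pos hε).le, max_eq_right (half_pos hε).le]
      rw [h2]; linarith
    have hL : ∃ p ∈ frontier A, p.1 = xL := by
      have hloc : ∀ p : ℝ × ℝ, ∀ ε : ℝ, 0 < ε →
          ∃ q, dist q p < ε ∧ (fun q : ℝ × ℝ => -q.1) p < (fun q : ℝ × ℝ => -q.1) q := by
        intro p ε hε
        refine ⟨(p.1 - ε / 2, p.2), ?_, by simp; linarith⟩
        have h2 : dist ((p.1 - ε / 2, p.2) : ℝ × ℝ) p = ε / 2 := by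
          rw [Prod.dist_eq]
          simp only [Real.dist_eq, dist_self, sub_sub_cancel_left]
          rw [abs_neg, abs_of_nonneg (half_pos hε).le, max_eq_left (half_pos hε).le]
        rw [h2]; linarith
      obtain ⟨p, hp, he⟩ := exists_frontier_max A hne hbdd hopen (fun q => -q.1)
        continuous_fst.neg hloc
      refine ⟨p, hp, ?_⟩
      have himg : (fun q : ℝ × ℝ => -q.1) '' A = -(Prod.fst '' A) := by
        ext x
        simp only [Set.mem_image, Set.mem_neg]
        constructor
        · rintro ⟨q, hq, rfl⟩; exact ⟨q, hq, by ring⟩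
        · rintro ⟨q, hq, h⟩; exact ⟨q, hq, by linarith⟩
      rw [himg] at he
      have h2 : sSup (-(Prod.fst '' A)) = -xL := by rw [hxLdef, Real.sInf_def, neg_neg]
      rw [h2] at he
      linarith
    have hB : ∃ p ∈ frontier A, p.2 = yB := by
      have hloc : ∀ p : ℝ × ℝ, ∀ ε : ℝ, 0 < ε →
          ∃ q, dist q p < ε ∧ (fun q : ℝ × ℝ => -q.2) p < (fun q : ℝ × ℝ => -q.2) q := by
        intro p ε hε
        refine ⟨(p.1, p.2 - ε / 2), ?_, by simp; linarith⟩
        have h2 : dist ((p.1, p.2 - ε / 2) : ℝ × ℝ) p = ε / 2 := by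
          rw [Prod.dist_eq]
          simp only [Real.dist_eq, dist_self, sub_sub_cancel_left]
          rw [abs_neg, abs_of_nonneg (half_pos hε).le, max_eq_right (half_pos hε).le]
        rw [h2]; linarith
      obtain ⟨p, hp, he⟩ := exists_frontier_max A hne hbdd hopen (fun q => -q.2)
        continuous_snd.neg hloc
      refine ⟨p, hp, ?_⟩
      have himg : (fun q : ℝ × ℝ => -q.2) '' A = -(Prod.snd '' A) := by
        ext x
        simp only [Set.mem_image, Set.mem_neg]
        constructor
        · rintro ⟨q, hq, rfl⟩; exact ⟨q, hq, by ring⟩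
        · rintro ⟨q, hq, h⟩; exact ⟨q, hq, by linarith⟩
      rw [himg] at he
      have h2 : sSup (-(Prod.snd '' A)) = -yB := by rw [hyBdef, Real.sInf_def, neg_neg]
      rw [h2] at he
      linarith
    obtain ⟨pR, hpRf, hpR⟩ := hR
    obtain ⟨pL, hpLf, hpL⟩ := hL
    obtain ⟨pT, hpTf, hpT⟩ := hT
    obtain ⟨pB, hpBf, hpB⟩ := hB
    rw [hfrontier] at hpRf hpLf hpTf hpBf
    obtain ⟨tR, htR, htReq⟩ := hpRf
    obtain ⟨tL, htL, htLeq⟩ := hpLf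
    obtain ⟨tT, htT, htTeq⟩ := hpTf
    obtain ⟨tB, htB, htBeq⟩ := hpBf
    set f : ℝ → WithLp 1 (ℝ × ℝ) := fun t => (WithLp.equiv 1 (ℝ × ℝ)).symm (lam t) with hfdef
    have hf01 : f 0 = f 1 := by simp only [hfdef, hclosed]
    set a' := min tL tR with ha'
    set b' := max tL tR with hb'
    set c' := min tB tT with hc'
    set d' := max tB tT with hd'
    have hab : a' ≤ b' := min_le_max
    have hcd : c' ≤ d' := min_le_max
    have ha0 : 0 ≤ a' := le_min htL.1 htR.1
    have hb1 : b' ≤ 1 := max_le htL.2 htR.2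
    have hc0 : 0 ≤ c' := le_min htB.1 htT.1
    have hd1 : d' ≤ 1 := max_le htB.2 htT.2
    have hx : |(f b').fst - (f a').fst| = xR - xL := by
      rcases le_total tL tR with h | h
      · rw [ha', hb', min_eq_left h, max_eq_right h]
        show |(lam tR).1 - (lam tL).1| = xR - xL
        rw [htReq, htLeq, hpR, hpL]
        exact abs_of_nonneg (sub_nonneg.2 hxLR)
      · rw [ha', hb', min_eq_right h, max_eq_left h]
        show |(lam tL).1 - (lam tR).1| = xR - xL
        rw [htReq, htLeq, hpR, hpL, abs_sub_comm]
        exact abs_of_nonneg (sub_nonneg.2 hxLR)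
    have hy : |(f d').snd - (f c').snd| = yT - yB := by
      rcases le_total tB tT with h | h
      · rw [hc', hd', min_eq_left h, max_eq_right h]
        show |(lam tT).2 - (lam tB).2| = yT - yB
        rw [htTeq, htBeq, hpT, hpB]
        exact abs_of_nonneg (sub_nonneg.2 hyBT)
      · rw [hc', hd', min_eq_right h, max_eq_left h]
        show |(lam tB).2 - (lam tT).2| = yT - yB
        rw [htTeq, htBeq, hpT, hpB, abs_sub_comm]
        exact abs_of_nonneg (sub_nonneg.2 hyBT)
    have H : ENNReal.ofReal (2 * (xR - xL)) + ENNReal.ofReal (2 * (yT - yB))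
        ≤ eVariationOn f (Set.Icc 0 1) := by
      rcases le_total b' c' with h1 | h1
      · have key := six_chain f hf01 (seq6 a' b' c' d')
          (seq6_mono ha0 hab h1 hcd hd1) (seq6_mem ha0 hab h1 hcd hd1) rfl rfl
          1 2 3 4 (by norm_num) (by norm_num) (by norm_num) (by norm_num)
        rw [show seq6 a' b' c' d' 1 = a' from rfl, show seq6 a' b' c' d' 2 = b' from rfl,
          show seq6 a' b' c' d' 3 = c' from rfl, show seq6 a' b' c' d' 4 = d' from rfl,
          hx, hy] at key
        exact key
      rcases le_total d' a' with h2 | h2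
      · have key := six_chain f hf01 (seq6 c' d' a' b')
          (seq6_mono hc0 hcd h2 hab hb1) (seq6_mem hc0 hcd h2 hab hb1) rfl rfl
          3 4 1 2 (by norm_num) (by norm_num) (by norm_num) (by norm_num)
        rw [show seq6 c' d' a' b' 3 = a' from rfl, show seq6 c' d' a' b' 4 = b' from rfl,
          show seq6 c' d' a' b' 1 = c' from rfl, show seq6 c' d' a' b' 2 = d' from rfl,
          hx, hy] at key
        exact key
      rcases le_total a' c' with h3 | h3 <;> rcases le_total b' d' with h4 | h4
      · have key := six_chain f hf01 (seq6 a' c' b' d')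
          (seq6_mono ha0 h3 h1 h4 hd1) (seq6_mem ha0 h3 h1 h4 hd1) rfl rfl
          1 3 2 4 (by norm_num) (by norm_num) (by norm_num) (by norm_num)
        rw [show seq6 a' c' b' d' 1 = a' from rfl, show seq6 a' c' b' d' 3 = b' from rfl,
          show seq6 a' c' b' d' 2 = c' from rfl, show seq6 a' c' b' d' 4 = d' from rfl,
          hx, hy] at key
        exact key
      · have key := six_chain f hf01 (seq6 a' c' d' b')
          (seq6_mono ha0 h3 hcd h4 hb1) (seq6_mem ha0 h3 hcd h4 hb1) rfl rfl
          1 4 2 3 (by norm_num) (by norm_num) (by norm_num) (by norm_num)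
        rw [show seq6 a' c' d' b' 1 = a' from rfl, show seq6 a' c' d' b' 4 = b' from rfl,
          show seq6 a' c' d' b' 2 = c' from rfl, show seq6 a' c' d' b' 3 = d' from rfl,
          hx, hy] at key
        exact key
      · have key := six_chain f hf01 (seq6 c' a' b' d')
          (seq6_mono hc0 h3 hab h4 hd1) (seq6_mem hc0 h3 hab h4 hd1) rfl rfl
          2 3 1 4 (by norm_num) (by norm_num) (by norm_num) (by norm_num)
        rw [show seq6 c' a' b' d' 2 = a' from rfl, show seq6 c' a' b' d' 3 = b' from rfl,
          show seq6 c' a' b' d' 1 = c' from rfl, show seq6 c' a' b' d' 4 = d' from rfl,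
          hx, hy] at key
        exact key
      · have key := six_chain f hf01 (seq6 c' a' d' b')
          (seq6_mono hc0 h3 h2 h4 hb1) (seq6_mem hc0 h3 h2 h4 hb1) rfl rfl
          2 4 1 3 (by norm_num) (by norm_num) (by norm_num) (by norm_num)
        rw [show seq6 c' a' d' b' 2 = a' from rfl, show seq6 c' a' d' b' 4 = b' from rfl,
          show seq6 c' a' d' b' 1 = c' from rfl, show seq6 c' a' d' b' 3 = d' from rfl,
          hx, hy] at key
        exact key
    have hsplit : (2:ℝ) * ((xR - xL) + (yT - yB)) = 2 * (xR - xL) + 2 * (yT - yB) := by ring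
    rw [hsplit, ENNReal.ofReal_add (by linarith) (by linarith)]
    exact H
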